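/- Let λ* minimize λ ↦ η^⊤ d(μ,λ) over the set B'_k(m,μ) = {λ ∈ [μ_⋆, μ*]^K ∩ F_{≤m} : λ_k = λ_{k*(μ)} = μ*}, where k ∉ N(μ). Assume each d_j(μ_j, ·) is strictly decreasing below μ_j, strictly increasing above μ_j, and vanishes at μ_j, and η > 0 componentwise. Then every mode of λ* other than k is a mode of μ, i.e., M(λ*) ⊆ M(μ) ∪ {k}. -/

import Mathlib

def IsMode {K : ℕ} (G : SimpleGraph (Fin K)) (lam : Fin K → ℝ) (k : Fin K) : Prop :=
  ∀ l, G.Adj k l → lam l < lam k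

def AtMostModal {K : ℕ} (G : SimpleGraph (Fin K)) (m : ℕ) : Set (Fin K → ℝ) :=
  {lam | {k | IsMode G lam k}.ncard ≤ m}

def ModeNeighborhood {K : ℕ} (G : SimpleGraph (Fin K)) (mu : Fin K → ℝ) : Set (Fin K) :=
  {j | IsMode G mu j ∨ ∃ i, IsMode G mu i ∧ G.Adj i j}

/-- `B'_k(m,μ) = {λ ∈ [μ_⋆,μ*]^K ∩ F_{≤m} : λ_k = λ_{k*(μ)} = μ*}`. -/
def CompactConfusingSetAt {K : ℕ} (G : SimpleGraph (Fin K)) (m : ℕ) (mu : Fin K → ℝ)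
    (mlo mhi : ℝ) (kstar k : Fin K) : Set (Fin K → ℝ) :=
  {lam | (∀ i, lam i ∈ Set.Icc mlo mhi) ∧ lam ∈ AtMostModal G m ∧
    lam k = mhi ∧ lam kstar = mhi}

/-- Modes location: if `λ*` minimizes `η^⊤ d(μ,·)` over `B'_k(m,μ)` with `k ∉ N(μ)`,
then every mode of `λ*` other than `k` is a mode of `μ`. -/
theorem modes_location {K m : ℕ} (G : SimpleGraph (Fin K))
    (mu : Fin K → ℝ) (kstar : Fin K) (mlo mhi : ℝ)
    (hmu : mu ∈ AtMostModal G m)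
    (hkstar : ∀ j, j ≠ kstar → mu j < mu kstar)
    (hmhi : mhi = mu kstar) (hmlo : ∀ i, mlo ≤ mu i)
    (k : Fin K) (hk : k ≠ kstar) (hkN : k ∉ ModeNeighborhood G mu)
    (η : Fin K → ℝ) (hη : ∀ j, 0 < η j)
    (d : Fin K → ℝ → ℝ → ℝ)
    (hd0 : ∀ j x y, 0 ≤ d j x y)
    (hdcont : ∀ j (x : ℝ), Continuous (d j x))
    (hdzero : ∀ j (x : ℝ), d j x x = 0)
    (hdanti : ∀ j (x : ℝ), StrictAntiOn (d j x) (Set.Iic x))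
    (hdmono : ∀ j (x : ℝ), StrictMonoOn (d j x) (Set.Ici x))
    (lamstar : Fin K → ℝ)
    (hmem : lamstar ∈ CompactConfusingSetAt G m mu mlo mhi kstar k)
    (hmin : ∀ lam ∈ CompactConfusingSetAt G m mu mlo mhi kstar k,
      ∑ j, η j * d j (mu j) (lamstar j) ≤ ∑ j, η j * d j (mu j) (lam j)) :
    ∀ i, IsMode G lamstar i → i = k ∨ IsMode G mu i := by
  classical
  intro i hi
  by_contra hcon
  push_neg at hcon
  obtain ⟨hik, himu⟩ := hcon
  obtain ⟨hbox, hmodal, hlk, hlkstar⟩ := hmem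
  have hkstarmode : IsMode G mu kstar := fun l hl => hkstar l (G.ne_of_adj hl).symm
  have hikstar : i ≠ kstar := fun h => himu (h ▸ hkstarmode)
  have hknadj : ¬ G.Adj i k := by
    intro h
    have h2 := hi k h
    rw [hlk] at h2
    exact absurd (hbox i).2 (not_le.mpr h2)
  have hkstarnadj : ¬ G.Adj i kstar := by
    intro h
    have h2 := hi kstar h
    rw [hlkstar] at h2
    exact absurd (hbox i).2 (not_le.mpr h2)
  rw [IsMode] at himu
  push_neg at himu
  obtain ⟨l0, hl0adj, hl0mu⟩ := himu
  have hl0i : l0 ≠ i := fun h => G.irrefl (h ▸ hl0adj)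
  have hsne : (Finset.univ.filter (G.Adj i)).Nonempty := ⟨l0, by simp [hl0adj]⟩
  obtain ⟨l1, hl1s, hl1max⟩ := Finset.exists_max_image _ lamstar hsne
  have hl1adj : G.Adj i l1 := by simpa using hl1s
  have hmax : ∀ l, G.Adj i l → lamstar l ≤ lamstar l1 := fun l hl => hl1max l (by simp [hl])
  have hMlt : lamstar l1 < lamstar i := hi l1 hl1adj
  have hmuimhi : mu i ≤ mhi := by rw [hmhi]; exact (hkstar i hikstar).le
  by_cases hc : mu i ≤ lamstar l1
  · -- Case 1: lower coordinate i to the max neighbor value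
    set lam' := Function.update lamstar i (lamstar l1) with hlam'
    have hval : ∀ j, j ≠ i → lam' j = lamstar j := fun j hj => Function.update_of_ne hj _ _
    have hvi : lam' i = lamstar l1 := Function.update_self _ _ _
    have hsub : {j | IsMode G lam' j} ⊆ {j | IsMode G lamstar j} := by
      intro j hj
      rcases eq_or_ne j i with rfl | hji
      · have := hj l1 hl1adj
        rw [hvi, hval l1 (fun h => G.irrefl (h ▸ hl1adj))] at this
        exact absurd this (lt_irrefl _)
      · by_cases hadj : G.Adj i j
        · have := hj i (G.adj_symm hadj)
          rw [hvi, hval j hji] at this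
          exact absurd this (not_lt.mpr (hmax j hadj))
        · intro l hl
          have hli : l ≠ i := fun h => hadj (G.adj_symm (h ▸ hl))
          have := hj l hl
          rwa [hval l hli, hval j hji] at this
    have hfeas : lam' ∈ CompactConfusingSetAt G m mu mlo mhi kstar k := by
      refine ⟨fun j => ?_, (Set.ncard_le_ncard hsub (Set.toFinite _)).trans hmodal,
        by rw [hval k (Ne.symm hik)]; exact hlk,
        by rw [hval kstar (Ne.symm hikstar)]; exact hlkstar⟩
      rcases eq_or_ne j i with rfl | hji
      · rw [hvi]; exact hbox l1
      · rw [hval j hji]; exact hbox j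
    have hsumlt : ∑ j, η j * d j (mu j) (lam' j) < ∑ j, η j * d j (mu j) (lamstar j) := by
      refine Finset.sum_lt_sum (fun j _ => ?_) ⟨i, Finset.mem_univ i, ?_⟩
      · rcases eq_or_ne j i with rfl | hji
        · rw [hvi]
          exact mul_le_mul_of_nonneg_left
            (le_of_lt (hdmono j (mu j) (Set.mem_Ici.mpr hc)
              (Set.mem_Ici.mpr (hc.trans hMlt.le)) hMlt)) (hη j).le
        · rw [hval j hji]
      · rw [hvi]
        exact mul_lt_mul_of_pos_left
          (hdmono i (mu i) (Set.mem_Ici.mpr hc) (Set.mem_Ici.mpr (hc.trans hMlt.le)) hMlt) (hη i)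
    exact absurd (hmin lam' hfeas) (not_le.mpr hsumlt)
  · -- Case 2: set both coordinate i and its neighbor l0 to mu i
    push_neg at hc
    have hl0lam : lamstar l0 < mu i := (hmax l0 hl0adj).trans_lt hc
    have hkl0 : k ≠ l0 := fun h => hknadj (h ▸ hl0adj)
    have hkstarl0 : kstar ≠ l0 := fun h => hkstarnadj (h ▸ hl0adj)
    set lam' := Function.update (Function.update lamstar i (mu i)) l0 (mu i) with hlam'
    have hval : ∀ j, j ≠ i → j ≠ l0 → lam' j = lamstar j := fun j hj hj0 => by
      rw [hlam', Function.update_of_ne hj0, Function.update_of_ne hj]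
    have hvi : lam' i = mu i := by
      rw [hlam', Function.update_of_ne (Ne.symm hl0i), Function.update_self]
    have hvl0 : lam' l0 = mu i := Function.update_self _ _ _
    have hsub : {j | IsMode G lam' j} ⊆ {j | IsMode G lamstar j} := by
      intro j hj
      rcases eq_or_ne j i with rfl | hji
      · have := hj l0 hl0adj
        rw [hvi, hvl0] at this
        exact absurd this (lt_irrefl _)
      rcases eq_or_ne j l0 with rfl | hjl0
      · have := hj i (G.adj_symm hl0adj)
        rw [hvi, hvl0] at this
        exact absurd this (lt_irrefl _)
      by_cases hadj : G.Adj i j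
      · have := hj i (G.adj_symm hadj)
        rw [hvi, hval j hji hjl0] at this
        exact absurd this (not_lt.mpr ((hmax j hadj).trans hc.le))
      · intro l hl
        have hli : l ≠ i := fun h => hadj (G.adj_symm (h ▸ hl))
        rcases eq_or_ne l l0 with rfl | hll0
        · have := hj l hl
          rw [hvl0, hval j hji hjl0] at this
          exact hl0lam.trans this
        · have := hj l hl
          rwa [hval l hli hll0, hval j hji hjl0] at this
    have hfeas : lam' ∈ CompactConfusingSetAt G m mu mlo mhi kstar k := by
      refine ⟨fun j => ?_, (Set.ncard_le_ncard hsub (Set.toFinite _)).trans hmodal,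
        by rw [hval k (Ne.symm hik) hkl0]; exact hlk,
        by rw [hval kstar (Ne.symm hikstar) hkstarl0]; exact hlkstar⟩
      rcases eq_or_ne j i with rfl | hji
      · rw [hvi]; exact ⟨hmlo j, hmuimhi⟩
      rcases eq_or_ne j l0 with rfl | hjl0
      · rw [hvl0]; exact ⟨hmlo i, hmuimhi⟩
      · rw [hval j hji hjl0]; exact hbox j
    have hsumlt : ∑ j, η j * d j (mu j) (lam' j) < ∑ j, η j * d j (mu j) (lamstar j) := by
      refine Finset.sum_lt_sum (fun j _ => ?_) ⟨l0, Finset.mem_univ l0, ?_⟩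
      · rcases eq_or_ne j i with rfl | hji
        · rw [hvi, hdzero j (mu j), mul_zero]
          exact mul_nonneg (hη j).le (hd0 j _ _)
        rcases eq_or_ne j l0 with rfl | hjl0
        · rw [hvl0]
          exact mul_le_mul_of_nonneg_left
            (le_of_lt (hdanti j (mu j) (Set.mem_Iic.mpr (hl0lam.le.trans hl0mu))
              (Set.mem_Iic.mpr hl0mu) hl0lam)) (hη j).le
        · rw [hval j hji hjl0]
      · rw [hvl0]
        exact mul_lt_mul_of_pos_left
          (hdanti l0 (mu l0) (Set.mem_Iic.mpr (hl0lam.le.trans hl0mu))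
            (Set.mem_Iic.mpr hl0mu) hl0lam) (hη l0)
    exact absurd (hmin lam' hfeas) (not_le.mpr hsumlt)
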